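/- If α = e^{2πid/m}·r₊ is a complex root of u(x) = x^{m+1}(x^{m+1}+x)^k − 1, where r₊ is the unique positive real root of u and d ∈ ℤ, then m divides (k+1)d. -/

import Mathlib

theorem divisibility_condition (m k : ℕ) (hm : 1 ≤ m) (hk : 1 ≤ k) (r : ℝ) (hr : 0 < r)
    (hroot : r ^ (m + 1) * (r ^ (m + 1) + r) ^ k - 1 = 0) (d : ℤ)
    (hα : (Complex.exp (2 * Real.pi * Complex.I * d / m) * r) ^ (m + 1) *
      ((Complex.exp (2 * Real.pi * Complex.I * d / m) * r) ^ (m + 1) +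
        Complex.exp (2 * Real.pi * Complex.I * d / m) * r) ^ k - 1 = 0) :
    (m : ℤ) ∣ ((k : ℤ) + 1) * d := by
  set ζ := Complex.exp (2 * Real.pi * Complex.I * d / m) with hζdef
  have hmC : (m : ℂ) ≠ 0 := Nat.cast_ne_zero.mpr (by omega)
  have hζm : ζ ^ m = 1 := by
    rw [hζdef, ← Complex.exp_nat_mul]
    have h : (m : ℂ) * (2 * Real.pi * Complex.I * d / m) = d * (2 * Real.pi * Complex.I) := by
      field_simp
    rw [h, Complex.exp_int_mul_two_pi_mul_I]
  have hrR : r ^ (m + 1) * (r ^ (m + 1) + r) ^ k = 1 := by linarith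
  have hrC : ((r : ℂ)) ^ (m + 1) * ((r : ℂ) ^ (m + 1) + r) ^ k = 1 := by
    exact_mod_cast congrArg (Complex.ofReal) hrR
  have h1 : (ζ * r) ^ (m + 1) = ζ * (r : ℂ) ^ (m + 1) := by
    rw [mul_pow, pow_succ, hζm, one_mul, mul_comm]
  have h2 : (ζ * r) ^ (m + 1) + ζ * r = ζ * ((r : ℂ) ^ (m + 1) + r) := by
    rw [h1]; ring
  have key : ζ ^ (k + 1) = 1 := by
    have h3 := hα
    rw [h1, ← mul_add, mul_pow] at h3
    have h4 : ζ ^ (k + 1) * ((r : ℂ) ^ (m + 1) * ((r : ℂ) ^ (m + 1) + r) ^ k) - 1 = 0 := by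
      linear_combination h3
    rwa [hrC, mul_one, sub_eq_zero] at h4
  have key2 : Complex.exp ((((k + 1 : ℕ)) : ℂ) * (2 * Real.pi * Complex.I * d / m)) = 1 := by
    rw [Complex.exp_nat_mul]; exact key
  push_cast at key2
  rw [Complex.exp_eq_one_iff] at key2
  obtain ⟨n, hn⟩ := key2
  have h2πI : (2 * (Real.pi : ℂ) * Complex.I) ≠ 0 := by
    simp [Real.pi_ne_zero, Complex.I_ne_zero]
  have hC : ((k : ℂ) + 1) * d = n * m := by
    field_simp at hn
    apply mul_left_cancel₀ h2πI
    linear_combination (2 * (Real.pi : ℂ) * Complex.I) * hn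
  have hZ : ((k : ℤ) + 1) * d = n * m := by exact_mod_cast hC
  exact ⟨n, by linarith⟩
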